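/- Let f, ℓ ∈ C^∞(ℝ^d;ℝ), let ζ ∈ C_c^∞(ℝ;ℝ), and let τ, h > 0. Define G(t) = ∫_0^t ζ(s/τ) e^{−s²/(2h)} ds and u(x) = G(ℓ(x)) e^{−f(x)/h}. Then the pointwise identity (−h²Δ + |∇f|² − hΔf) u = e^{−(f + ℓ²/2)/h} [ ζ(ℓ/τ)(2h ∇f·∇ℓ + h ℓ |∇ℓ|² − h² Δℓ) − (h²/τ) ζ′(ℓ/τ) |∇ℓ|² ] holds on ℝ^d. -/

import Mathlib

open MeasureTheory Metric Set intervalIntegral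

noncomputable section

/-- The Euclidean Laplacian `Δu = Σ_j ∂²u/∂x_j²` of a function on `ℝ^d`. -/
def lapl {d : ℕ} (u : EuclideanSpace ℝ (Fin d) → ℝ) (x : EuclideanSpace ℝ (Fin d)) : ℝ :=
  ∑ i : Fin d,
    fderiv ℝ (fun y => fderiv ℝ u y (EuclideanSpace.single i 1)) x (EuclideanSpace.single i 1)

/-- The semiclassical Witten Laplacian `Δ_f = -h²Δ + |∇f|² - hΔf` applied pointwise
to smooth functions. -/
def witten {d : ℕ} (f : EuclideanSpace ℝ (Fin d) → ℝ) (h : ℝ)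
    (u : EuclideanSpace ℝ (Fin d) → ℝ) (x : EuclideanSpace ℝ (Fin d)) : ℝ :=
  - h ^ 2 * lapl u x + ‖gradient f x‖ ^ 2 * u x - h * lapl f x * u x

set_option maxHeartbeats 1000000 in
/-- **Action of the Witten Laplacian on Gaussian-type quasimodes.**
Let `f, ℓ ∈ C^∞(ℝ^d; ℝ)`, `ζ ∈ C_c^∞(ℝ; ℝ)` and `τ, h > 0`. Define
`G(t) = ∫_0^t ζ(s/τ) e^{-s²/(2h)} ds` and `u(x) = G(ℓ(x)) e^{-f(x)/h}`. Then pointwise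
`Δ_f u = e^{-(f + ℓ²/2)/h} [ ζ(ℓ/τ)(2h ∇f·∇ℓ + h ℓ |∇ℓ|² - h² Δℓ) - (h²/τ) ζ'(ℓ/τ) |∇ℓ|² ]`
on `ℝ^d`. -/
theorem witten_apply_gaussian_quasimode
    {d : ℕ} (f ℓ : EuclideanSpace ℝ (Fin d) → ℝ) (ζ : ℝ → ℝ) (τ h : ℝ)
    (hf : ContDiff ℝ (⊤ : ℕ∞) f) (hℓ : ContDiff ℝ (⊤ : ℕ∞) ℓ)
    (hζ : ContDiff ℝ (⊤ : ℕ∞) ζ) (hζc : HasCompactSupport ζ)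
    (hτ : 0 < τ) (hh : 0 < h)
    (G : ℝ → ℝ) (hG : ∀ t, G t = ∫ s in (0 : ℝ)..t, ζ (s / τ) * Real.exp (- s ^ 2 / (2 * h)))
    (u : EuclideanSpace ℝ (Fin d) → ℝ)
    (hu : ∀ x, u x = G (ℓ x) * Real.exp (- f x / h)) :
    ∀ x, witten f h u x =
      Real.exp (- (f x + (ℓ x) ^ 2 / 2) / h) *
        ( ζ (ℓ x / τ) *
            (2 * h * (inner ℝ (gradient f x) (gradient ℓ x) : ℝ)
              + h * ℓ x * ‖gradient ℓ x‖ ^ 2 - h ^ 2 * lapl ℓ x)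
          - (h ^ 2 / τ) * deriv ζ (ℓ x / τ) * ‖gradient ℓ x‖ ^ 2 ) := by
  have hu' : u = fun x => G (ℓ x) * Real.exp (- f x / h) := funext hu
  subst hu'
  have hne : h ≠ 0 := ne_of_gt hh
  have hτne : τ ≠ 0 := ne_of_gt hτ
  have hle1 : ((⊤:ℕ∞) : WithTop ℕ∞) ≠ 0 := by simp
  have hle2 : ((⊤:ℕ∞) : WithTop ℕ∞) + 1 ≤ ((⊤:ℕ∞) : WithTop ℕ∞) := by
    exact_mod_cast le_top
  have hcongr : ∀ {φ ψ : EuclideanSpace ℝ (Fin d) → ℝ} {L : EuclideanSpace ℝ (Fin d) →L[ℝ] ℝ}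
      {y}, φ = ψ → HasFDerivAt φ L y → HasFDerivAt ψ L y := by
    rintro _ _ _ _ rfl hx; exact hx
  set g : ℝ → ℝ := fun t => ζ (t / τ) * Real.exp (- t ^ 2 / (2 * h)) with hgdef
  set gd : ℝ → ℝ := fun t => deriv ζ (t / τ) / τ * Real.exp (- t ^ 2 / (2 * h))
      + ζ (t / τ) * (Real.exp (- t ^ 2 / (2 * h)) * (- t / h)) with hgddef
  have hgc : Continuous g := by
    apply ((hζ.continuous).comp (continuous_id.div_const τ)).mul
    exact Real.continuous_exp.comp ((continuous_pow 2).neg.div_const (2 * h))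
  have hGder : ∀ t, HasDerivAt G (g t) t := by
    intro t
    have h1 := (hgc.integral_hasStrictDerivAt 0 t).hasDerivAt
    have hGeq : G = fun t => ∫ s in (0 : ℝ)..t, g s := funext hG
    rw [hGeq]; exact h1
  have hgder : ∀ t, HasDerivAt g (gd t) t := by
    intro t
    have h1 : HasDerivAt (fun s => ζ (s / τ)) (deriv ζ (t / τ) / τ) t := by
      have := ((hζ.differentiable hle1 (t / τ)).hasDerivAt).comp t
        ((hasDerivAt_id t).div_const τ)
      refine HasDerivAt.congr_deriv this ?_
      field_simp
    have h2 : HasDerivAt (fun s : ℝ => Real.exp (- s ^ 2 / (2 * h)))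
        (Real.exp (- t ^ 2 / (2 * h)) * (- t / h)) t := by
      have hi : HasDerivAt (fun s : ℝ => - s ^ 2 / (2 * h)) (- t / h) t := by
        have := ((hasDerivAt_pow 2 t).neg).div_const (2 * h)
        refine HasDerivAt.congr_deriv this ?_
        field_simp
        ring
      exact (Real.hasDerivAt_exp _).comp t hi
    exact h1.mul h2
  have hfd : Differentiable ℝ f := hf.differentiable hle1
  have hℓd : Differentiable ℝ ℓ := hℓ.differentiable hle1
  set e : Fin d → EuclideanSpace ℝ (Fin d) := fun i => EuclideanSpace.single i 1 with hedef
  have hDf : ∀ i : Fin d, Differentiable ℝ (fun y => fderiv ℝ f y (e i)) := fun i =>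
    ((hf.fderiv_right hle2).differentiable hle1).clm_apply (differentiable_const _)
  have hDℓ : ∀ i : Fin d, Differentiable ℝ (fun y => fderiv ℝ ℓ y (e i)) := fun i =>
    ((hℓ.fderiv_right hle2).differentiable hle1).clm_apply (differentiable_const _)
  have hEder : ∀ y, HasFDerivAt (fun z => Real.exp (- f z / h))
      ((Real.exp (- f y / h) * (-1 / h)) • fderiv ℝ f y) y := by
    intro y
    have h1 : HasFDerivAt (fun z => - f z / h) ((-1 / h : ℝ) • fderiv ℝ f y) y := by
      have := ((hfd y).hasFDerivAt.neg).mul_const (1 / h)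
      have heq : (fun z => - f z / h) = fun z => (- f z) * (1 / h) := by
        funext z; ring
      refine hcongr heq.symm ?_
      refine HasFDerivAt.congr_fderiv this ?_
      ext v
      simp [ContinuousLinearMap.smul_apply]
      ring
    have h2 := (Real.hasDerivAt_exp (- f y / h)).comp_hasFDerivAt y h1
    rw [smul_smul] at h2
    exact h2
  have hGℓder : ∀ y, HasFDerivAt (fun z => G (ℓ z)) (g (ℓ y) • fderiv ℝ ℓ y) y := fun y =>
    (hGder (ℓ y)).comp_hasFDerivAt y (hℓd y).hasFDerivAt
  have hgℓder : ∀ y, HasFDerivAt (fun z => g (ℓ z)) (gd (ℓ y) • fderiv ℝ ℓ y) y := fun y =>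
    (hgder (ℓ y)).comp_hasFDerivAt y (hℓd y).hasFDerivAt
  have hUder : ∀ y, HasFDerivAt (fun z => G (ℓ z) * Real.exp (- f z / h))
      (G (ℓ y) • ((Real.exp (- f y / h) * (-1 / h)) • fderiv ℝ f y)
        + Real.exp (- f y / h) • (g (ℓ y) • fderiv ℝ ℓ y)) y :=
    fun y => (hGℓder y).mul (hEder y)
  have hU1 : ∀ i : Fin d, (fun y => fderiv ℝ (fun z => G (ℓ z) * Real.exp (- f z / h)) y (e i))
      = fun y => G (ℓ y) * (Real.exp (- f y / h) * (-1 / h)) * fderiv ℝ f y (e i)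
        + Real.exp (- f y / h) * (g (ℓ y) * fderiv ℝ ℓ y (e i)) := by
    intro i; funext y
    rw [(hUder y).fderiv]
    simp [ContinuousLinearMap.add_apply, ContinuousLinearMap.smul_apply, smul_eq_mul]
    ring
  intro x
  -- per-coordinate second derivative
  have key : ∀ i : Fin d,
      fderiv ℝ (fun y => fderiv ℝ (fun z => G (ℓ z) * Real.exp (- f z / h)) y (e i)) x (e i)
      = Real.exp (- f x / h) *
          (gd (ℓ x) * fderiv ℝ ℓ x (e i) ^ 2
           + g (ℓ x) * fderiv ℝ (fun y => fderiv ℝ ℓ y (e i)) x (e i)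
           - (2 / h) * g (ℓ x) * (fderiv ℝ f x (e i) * fderiv ℝ ℓ x (e i))
           - (G (ℓ x) / h) * fderiv ℝ (fun y => fderiv ℝ f y (e i)) x (e i)
           + (G (ℓ x) / h ^ 2) * fderiv ℝ f x (e i) ^ 2) := by
    intro i
    rw [hU1 i]
    have h1 : HasFDerivAt
        (fun y => G (ℓ y) * (Real.exp (- f y / h) * (-1 / h)) * fderiv ℝ f y (e i))
        (((G (ℓ x) * (Real.exp (- f x / h) * (-1 / h))) • (fderiv ℝ (fun y => fderiv ℝ f y (e i)) x)
          + fderiv ℝ f x (e i) •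
            ((G (ℓ x)) • ((-1 / h : ℝ) • ((Real.exp (- f x / h) * (-1 / h))) • fderiv ℝ f x)
              + (Real.exp (- f x / h) * (-1 / h)) • (g (ℓ x) • fderiv ℝ ℓ x)))) x := by
      exact ((hGℓder x).mul ((hEder x).mul_const (-1 / h))).mul ((hDf i x).hasFDerivAt)
    have h2 : HasFDerivAt
        (fun y => Real.exp (- f y / h) * (g (ℓ y) * fderiv ℝ ℓ y (e i)))
        ((Real.exp (- f x / h)) •
            ((g (ℓ x)) • (fderiv ℝ (fun y => fderiv ℝ ℓ y (e i)) x)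
              + fderiv ℝ ℓ x (e i) • (gd (ℓ x) • fderiv ℝ ℓ x))
          + (g (ℓ x) * fderiv ℝ ℓ x (e i)) •
            ((Real.exp (- f x / h) * (-1 / h)) • fderiv ℝ f x)) x := by
      exact (hEder x).mul ((hgℓder x).mul ((hDℓ i x).hasFDerivAt))
    rw [(h1.fun_add h2).fderiv]
    simp only [ContinuousLinearMap.add_apply, ContinuousLinearMap.smul_apply, smul_eq_mul]
    field_simp
    ring
  -- gradients
  have hif : ∀ v, (inner ℝ (gradient f x) v : ℝ) = fderiv ℝ f x v := fun v =>
    InnerProductSpace.toDual_symm_apply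
  have hiℓ : ∀ v, (inner ℝ (gradient ℓ x) v : ℝ) = fderiv ℝ ℓ x v := fun v =>
    InnerProductSpace.toDual_symm_apply
  have hsum1 : ∑ i : Fin d, fderiv ℝ f x (e i) * fderiv ℝ ℓ x (e i)
      = (inner ℝ (gradient f x) (gradient ℓ x) : ℝ) := by
    rw [← (EuclideanSpace.basisFun (Fin d) ℝ).sum_inner_mul_inner (gradient f x) (gradient ℓ x)]
    refine Finset.sum_congr rfl fun i _ => ?_
    simp only [EuclideanSpace.basisFun_apply, real_inner_comm (gradient ℓ x), hif, hiℓ, hedef]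
  have hsumf : ∑ i : Fin d, fderiv ℝ f x (e i) ^ 2 = ‖gradient f x‖ ^ 2 := by
    rw [← real_inner_self_eq_norm_sq]
    rw [← (EuclideanSpace.basisFun (Fin d) ℝ).sum_inner_mul_inner (gradient f x) (gradient f x)]
    refine Finset.sum_congr rfl fun i _ => ?_
    simp only [EuclideanSpace.basisFun_apply, real_inner_comm (gradient f x), hif, hedef]
    ring
  have hsumℓ : ∑ i : Fin d, fderiv ℝ ℓ x (e i) ^ 2 = ‖gradient ℓ x‖ ^ 2 := by
    rw [← real_inner_self_eq_norm_sq]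
    rw [← (EuclideanSpace.basisFun (Fin d) ℝ).sum_inner_mul_inner (gradient ℓ x) (gradient ℓ x)]
    refine Finset.sum_congr rfl fun i _ => ?_
    simp only [EuclideanSpace.basisFun_apply, real_inner_comm (gradient ℓ x), hiℓ, hedef]
    ring
  have hlap : lapl (fun z => G (ℓ z) * Real.exp (- f z / h)) x
      = Real.exp (- f x / h) *
          (gd (ℓ x) * ‖gradient ℓ x‖ ^ 2 + g (ℓ x) * lapl ℓ x
           - (2 / h) * g (ℓ x) * (inner ℝ (gradient f x) (gradient ℓ x) : ℝ)
           - (G (ℓ x) / h) * lapl f x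
           + (G (ℓ x) / h ^ 2) * ‖gradient f x‖ ^ 2) := by
    unfold lapl
    calc ∑ i : Fin d,
          fderiv ℝ (fun y => fderiv ℝ (fun z => G (ℓ z) * Real.exp (- f z / h)) y
            (EuclideanSpace.single i 1)) x (EuclideanSpace.single i 1)
        = ∑ i : Fin d, Real.exp (- f x / h) *
          (gd (ℓ x) * fderiv ℝ ℓ x (e i) ^ 2
           + g (ℓ x) * fderiv ℝ (fun y => fderiv ℝ ℓ y (e i)) x (e i)
           - (2 / h) * g (ℓ x) * (fderiv ℝ f x (e i) * fderiv ℝ ℓ x (e i))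
           - (G (ℓ x) / h) * fderiv ℝ (fun y => fderiv ℝ f y (e i)) x (e i)
           + (G (ℓ x) / h ^ 2) * fderiv ℝ f x (e i) ^ 2) := by
          exact Finset.sum_congr rfl fun i _ => key i
      _ = _ := by
          rw [← hsum1, ← hsumf, ← hsumℓ]
          simp only [mul_add, mul_sub, Finset.mul_sum]
          simp only [← Finset.sum_add_distrib, ← Finset.sum_sub_distrib]
          rfl
  have hexp : Real.exp (- (f x + ℓ x ^ 2 / 2) / h)
      = Real.exp (- f x / h) * Real.exp (- ℓ x ^ 2 / (2 * h)) := by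
    rw [← Real.exp_add]
    congr 1
    field_simp
    ring
  unfold witten
  rw [hlap, hexp]
  simp only [hgdef, hgddef]
  field_simp
  ring
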